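/- Let α > 0 and β > 0 be real numbers with β < 2α + 1. For each integer n ≥ 2 set m = ⌈n^α⌉ and k = ⌈β·log₂ n⌉. Then liminf_{n→∞} Pr( there exist indices i < j and a position a with x_i(a) = x_j(a) ) ≥ 1/4. -/

import Mathlib

/-- The symbol of `x` at (0-indexed) position `t`, with junk value `false` out of range. -/
def get {n : ℕ} (x : Fin n → Bool) (t : ℕ) : Bool :=
  if h : t < n then x ⟨t, h⟩ else false

/-- The `k`-mer of `x` starting at (0-indexed) position `a`. -/
def kmer {n : ℕ} (k : ℕ) (x : Fin n → Bool) (a : ℕ) : Fin k → Bool :=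
  fun t => get x (a + t.val)

/-- Event D: two distinct strings of the family share a `k`-mer at a common position. -/
def eventD {n : ℕ} (m k : ℕ) (X : Fin m → Fin n → Bool) : Prop :=
  ∃ i j : Fin m, i < j ∧ ∃ a : ℕ, a + k ≤ n ∧ kmer k (X i) a = kmer k (X j) a

/-- Probability of an event under the uniform distribution on a finite sample space. -/
noncomputable def prob {Ω : Type*} [Fintype Ω] (p : Ω → Prop) : ℝ :=
  (Nat.card {ω // p ω} : ℝ) / (Fintype.card Ω : ℝ)

lemma card_ker_mul {G H : Type*} [AddGroup G] [AddGroup H] [Finite G]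
    (φ : G →+ H) (hs : Function.Surjective φ) :
    Nat.card {g : G // φ g = 0} * Nat.card H = Nat.card G := by
  have e1 : {g : G // φ g = 0} ≃ φ.ker :=
    Equiv.subtypeEquivRight (fun g => (AddMonoidHom.mem_ker (f := φ)).symm)
  have e2 : (G ⧸ φ.ker) ≃ H :=
    (QuotientAddGroup.quotientKerEquivOfSurjective φ hs).toEquiv
  rw [Nat.card_congr e1, ← Nat.card_congr e2,
    AddSubgroup.card_eq_card_quotient_mul_card_addSubgroup φ.ker, mul_comm]

def b2z : Bool ≃ ZMod 2 :=
  ⟨fun b => if b then 1 else 0, fun z => z = 1, by decide, by decide⟩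

lemma b2z_eq_iff (a b : Bool) : a = b ↔ b2z a + b2z b = 0 := by
  revert a b; decide

section Setup
variable {m n k : ℕ}

abbrev Omega (m n : ℕ) := Fin m → Fin n → Bool
abbrev GG (m n : ℕ) := Fin m → Fin n → ZMod 2

def omZ : Omega m n ≃ GG m n :=
  Equiv.piCongrRight (fun _ => Equiv.piCongrRight (fun _ => b2z))

lemma omZ_apply (X : Omega m n) (i : Fin m) (x : Fin n) :
    omZ X i x = b2z (X i x) := rfl

lemma pos_lt {b t : ℕ} (hb : (b+1)*k ≤ n) (ht : t < k) : b*k + t < n := by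
  have h1 : (b+1)*k = b*k + k := by ring
  omega

/-- The position of symbol `t` of block `b`, as an element of `Fin n`. -/
def posF (b : ℕ) (hb : (b+1)*k ≤ n) (t : Fin k) : Fin n :=
  ⟨b*k + t.val, pos_lt hb t.isLt⟩

/-- The parity-check homomorphism for event `(i,j,b)`. -/
def phi (i j : Fin m) (b : ℕ) (hb : (b+1)*k ≤ n) : GG m n →+ (Fin k → ZMod 2) where
  toFun := fun Y t => Y i (posF b hb t) + Y j (posF b hb t)
  map_zero' := by funext t; simp
  map_add' := by intro Y Z; funext t; simp [Pi.add_apply]; ring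

lemma phi_apply (i j : Fin m) (b : ℕ) (hb : (b+1)*k ≤ n) (Y : GG m n) (t : Fin k) :
    phi i j b hb Y t = Y i (posF b hb t) + Y j (posF b hb t) := rfl

/-- Event `(i,j,b)` as an equation on the ZMod 2 side. -/
lemma event_iff (i j : Fin m) (b : ℕ) (hb : (b+1)*k ≤ n) (X : Omega m n) :
    (kmer k (X i) (b*k) = kmer k (X j) (b*k)) ↔ phi i j b hb (omZ X) = 0 := by
  rw [funext_iff, funext_iff]
  apply forall_congr'
  intro t
  have hget : ∀ y : Fin n → Bool, kmer k y (b*k) t = y (posF b hb t) := by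
    intro y
    exact dif_pos (pos_lt hb t.isLt)
  rw [hget, hget, phi_apply, Pi.zero_apply, omZ_apply, omZ_apply, b2z_eq_iff]

/-- A configuration supported on row `c`, block `b`, with values `v`. -/
def bump (c : Fin m) (b : ℕ) (v : Fin k → ZMod 2) : GG m n :=
  fun l x => if h : l = c ∧ b*k ≤ x.val ∧ x.val < b*k + k then v ⟨x.val - b*k, by omega⟩ else 0

lemma bump_self (c : Fin m) (b : ℕ) (hb : (b+1)*k ≤ n) (v : Fin k → ZMod 2) (t : Fin k) :
    bump c b v c (posF b hb t) = v t := by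
  have ht := t.isLt
  rw [bump, dif_pos ⟨rfl, by simp only [posF]; omega, by simp only [posF]; omega⟩]
  congr 1
  apply Fin.ext
  simp [posF]

lemma bump_ne_row {c l : Fin m} (hl : l ≠ c) (b : ℕ) (v : Fin k → ZMod 2) (x : Fin n) :
    bump c b v l x = 0 := by
  rw [bump, dif_neg]; rintro ⟨rfl, -⟩; exact hl rfl

lemma bump_ne_block {b b' : ℕ} (hbb : b ≠ b') (c l : Fin m) (v : Fin k → ZMod 2)
    (hb' : (b'+1)*k ≤ n) (t : Fin k) :
    bump c b v l (posF b' hb' t) = 0 := by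
  have ht := t.isLt
  rw [bump, dif_neg]
  rintro ⟨-, h1, h2⟩
  simp only [posF] at h1 h2
  rcases Nat.lt_or_ge b b' with hlt | hge
  · have : (b+1)*k ≤ b'*k := Nat.mul_le_mul_right k hlt
    have h3 : (b+1)*k = b*k + k := by ring
    omega
  · have hlt : b' < b := lt_of_le_of_ne hge (Ne.symm hbb)
    have : (b'+1)*k ≤ b*k := Nat.mul_le_mul_right k hlt
    have h3 : (b'+1)*k = b'*k + k := by ring
    omega

lemma phi_bump_add (i j : Fin m) (hij : i ≠ j) (b : ℕ) (hb : (b+1)*k ≤ n)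
    (u : Fin k → ZMod 2) (c : Fin m) (hc : c = i ∨ c = j) (Z : GG m n)
    (hZi : ∀ t : Fin k, Z i (posF b hb t) = 0) (hZj : ∀ t : Fin k, Z j (posF b hb t) = 0) :
    phi i j b hb (bump c b u + Z) = u := by
  funext t
  rcases hc with rfl | rfl
  · rw [phi_apply]
    simp only [Pi.add_apply, hZi t, hZj t, add_zero]
    rw [bump_self, bump_ne_row hij.symm, add_zero]
  · rw [phi_apply]
    simp only [Pi.add_apply, hZi t, hZj t, add_zero]
    rw [bump_self, bump_ne_row hij, zero_add]

end Setup

section Counting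
variable {m n k : ℕ}

lemma phi_surj (i j : Fin m) (hij : i ≠ j) (b : ℕ) (hb : (b+1)*k ≤ n) :
    Function.Surjective (phi (n := n) i j b hb) := by
  intro u
  refine ⟨bump j b u + 0, ?_⟩
  exact phi_bump_add i j hij b hb u j (Or.inr rfl) 0 (fun t => rfl) (fun t => rfl)

lemma card_event (p : Omega m n → Prop) (q : GG m n → Prop) (hpq : ∀ X, p X ↔ q (omZ X)) :
    Nat.card {X : Omega m n // p X} = Nat.card {Y : GG m n // q Y} :=
  Nat.card_congr (Equiv.subtypeEquiv omZ hpq)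

lemma card_GG : Nat.card (GG m n) = Fintype.card (Omega m n) := by
  rw [← Nat.card_congr (omZ (m := m) (n := n)), Nat.card_eq_fintype_card]

lemma card_codom : Nat.card (Fin k → ZMod 2) = 2^k := by
  simp [Nat.card_eq_fintype_card]

lemma count_one (i j : Fin m) (hij : i ≠ j) (b : ℕ) (hb : (b+1)*k ≤ n) :
    Nat.card {X : Omega m n // kmer k (X i) (b*k) = kmer k (X j) (b*k)} * 2^k
      = Fintype.card (Omega m n) := by
  rw [card_event _ (fun Y => phi i j b hb Y = 0) (event_iff i j b hb)]
  have h := card_ker_mul (phi (n := n) i j b hb) (phi_surj i j hij b hb)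
  rwa [card_codom, card_GG] at h

lemma phi2_surj (i j i' j' : Fin m) (hij : i < j) (hij' : i' < j')
    (b b' : ℕ) (hb : (b+1)*k ≤ n) (hb' : (b'+1)*k ≤ n)
    (hne : ¬(i = i' ∧ j = j' ∧ b = b')) :
    Function.Surjective ((phi (n := n) i j b hb).prod (phi i' j' b' hb')) := by
  rintro ⟨u, v⟩
  by_cases hp : i = i' ∧ j = j'
  · obtain ⟨rfl, rfl⟩ := hp
    have hbb : b ≠ b' := by tauto
    refine ⟨bump j b u + bump j b' v, Prod.ext ?_ ?_⟩
    · exact phi_bump_add i j hij.ne b hb u j (Or.inr rfl) (bump j b' v)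
        (fun t => bump_ne_row hij.ne b' v _)
        (fun t => bump_ne_block (Ne.symm hbb) j j v hb t)
    · rw [add_comm]
      exact phi_bump_add i j hij.ne b' hb' v j (Or.inr rfl) (bump j b u)
        (fun t => bump_ne_row hij.ne b u _)
        (fun t => bump_ne_block hbb j j u hb' t)
  · have hij1 : i.val < j.val := hij
    have hij2 : i'.val < j'.val := hij'
    have h3 : ¬(i.val = i'.val ∧ j.val = j'.val) := by
      rw [Fin.val_inj, Fin.val_inj]; exact hp
    have hc : (¬ i.val = i'.val ∧ ¬ i.val = j'.val) ∨ (¬ j.val = i'.val ∧ ¬ j.val = j'.val) := by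
      omega
    have hc'0 : (¬ i'.val = i.val ∧ ¬ i'.val = j.val) ∨ (¬ j'.val = i.val ∧ ¬ j'.val = j.val) := by
      omega
    obtain ⟨c, hcmem, hc1, hc2⟩ : ∃ c, (c = i ∨ c = j) ∧ c ≠ i' ∧ c ≠ j' := by
      rcases hc with ⟨h1, h2⟩ | ⟨h1, h2⟩
      · exact ⟨i, Or.inl rfl, fun h => h1 (congrArg Fin.val h),
          fun h => h2 (congrArg Fin.val h)⟩
      · exact ⟨j, Or.inr rfl, fun h => h1 (congrArg Fin.val h),
          fun h => h2 (congrArg Fin.val h)⟩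
    obtain ⟨c', hcmem', hc1', hc2'⟩ : ∃ c', (c' = i' ∨ c' = j') ∧ c' ≠ i ∧ c' ≠ j := by
      rcases hc'0 with ⟨h1, h2⟩ | ⟨h1, h2⟩
      · exact ⟨i', Or.inl rfl, fun h => h1 (congrArg Fin.val h),
          fun h => h2 (congrArg Fin.val h)⟩
      · exact ⟨j', Or.inr rfl, fun h => h1 (congrArg Fin.val h),
          fun h => h2 (congrArg Fin.val h)⟩
    refine ⟨bump c b u + bump c' b' v, Prod.ext ?_ ?_⟩
    · exact phi_bump_add i j hij.ne b hb u c hcmem (bump c' b' v)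
        (fun t => bump_ne_row (Ne.symm hc1') b' v _)
        (fun t => bump_ne_row (Ne.symm hc2') b' v _)
    · rw [add_comm]
      exact phi_bump_add i' j' hij'.ne b' hb' v c' hcmem' (bump c b u)
        (fun t => bump_ne_row (Ne.symm hc1) b u _)
        (fun t => bump_ne_row (Ne.symm hc2) b u _)

end Counting

section Counting2
variable {m n k : ℕ}

lemma count_two {i j i' j' : Fin m} (hij : i < j) (hij' : i' < j') {b b' : ℕ}
    (hb : (b+1)*k ≤ n) (hb' : (b'+1)*k ≤ n) (hne : ¬(i = i' ∧ j = j' ∧ b = b')) :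
    Nat.card {X : Omega m n // (kmer k (X i) (b*k) = kmer k (X j) (b*k)) ∧
        kmer k (X i') (b'*k) = kmer k (X j') (b'*k)} * (2^k * 2^k)
      = Fintype.card (Omega m n) := by
  rw [card_event _ (fun Y => (phi i j b hb).prod (phi i' j' b' hb') Y = 0)
    (fun X => by
      rw [event_iff i j b hb, event_iff i' j' b' hb']
      simp only [AddMonoidHom.prod_apply, Prod.mk_eq_zero])]
  have h := card_ker_mul _ (phi2_surj i j i' j' hij hij' b b' hb hb' hne)
  rw [card_GG] at h
  rw [← h]
  congr 1
  simp [Nat.card_eq_fintype_card]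

end Counting2

open Finset in
lemma bonferroni {Ω ι : Type*} [Fintype Ω] [DecidableEq ι] (s : Finset ι)
    (A : ι → Ω → Prop) [∀ e, DecidablePred (A e)] :
    (∑ e ∈ s, ((univ.filter (A e)).card : ℝ))
      - (∑ e ∈ s, ∑ e' ∈ s.erase e,
          ((univ.filter (fun ω => A e ω ∧ A e' ω)).card : ℝ)) / 2
    ≤ ((univ.filter (fun ω => ∃ e ∈ s, A e ω)).card : ℝ) := by
  classical
  let T : Ω → ℕ := fun ω => (s.filter fun e => A e ω).card
  have h1 : ∑ e ∈ s, ((univ.filter (A e)).card : ℝ) = ∑ ω : Ω, (T ω : ℝ) := by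
    rw [← Nat.cast_sum, ← Nat.cast_sum]
    congr 1
    simp only [T, card_filter]
    rw [Finset.sum_comm]
  have h2 : ∀ (ω : Ω), ∀ e ∈ s,
      ∑ e' ∈ s.erase e, (if A e ω ∧ A e' ω then 1 else 0 : ℕ)
        = if A e ω then T ω - 1 else 0 := by
    intro ω e he
    by_cases hA : A e ω
    · rw [if_pos hA]
      have : ∀ e', (if A e ω ∧ A e' ω then 1 else 0 : ℕ) = if A e' ω then 1 else 0 := by
        intro e'; simp [hA]
      simp only [this]
      rw [← card_filter, filter_erase, card_erase_of_mem (by simp [hA, he])]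
    · rw [if_neg hA]
      apply Finset.sum_eq_zero
      intro e' _
      simp [hA]
  have h3 : ∑ e ∈ s, ∑ e' ∈ s.erase e,
      ((univ.filter (fun ω => A e ω ∧ A e' ω)).card : ℝ)
      = ∑ ω : Ω, ((T ω * (T ω - 1) : ℕ) : ℝ) := by
    rw [← Nat.cast_sum]
    have : ∑ e ∈ s, ∑ e' ∈ s.erase e, (univ.filter (fun ω => A e ω ∧ A e' ω)).card
        = ∑ ω : Ω, T ω * (T ω - 1) := by
      calc ∑ e ∈ s, ∑ e' ∈ s.erase e, (univ.filter (fun ω => A e ω ∧ A e' ω)).card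
          = ∑ e ∈ s, ∑ ω : Ω, ∑ e' ∈ s.erase e, (if A e ω ∧ A e' ω then 1 else 0) := by
            apply Finset.sum_congr rfl
            intro e _
            simp only [card_filter]
            rw [Finset.sum_comm]
        _ = ∑ ω : Ω, ∑ e ∈ s, ∑ e' ∈ s.erase e, (if A e ω ∧ A e' ω then 1 else 0) :=
            Finset.sum_comm
        _ = ∑ ω : Ω, T ω * (T ω - 1) := by
            apply Finset.sum_congr rfl
            intro ω _
            rw [Finset.sum_congr rfl (h2 ω), ← Finset.sum_filter, Finset.sum_const,
              smul_eq_mul]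
    rw [← this]
    push_cast
    rfl
  have h5 : ((univ.filter (fun ω => ∃ e ∈ s, A e ω)).card : ℝ)
      = ∑ ω : Ω, (if ∃ e ∈ s, A e ω then (1:ℝ) else 0) := by
    rw [card_filter, Nat.cast_sum]
    simp
  have h4 : ∀ ω : Ω, (T ω : ℝ) - ((T ω * (T ω - 1) : ℕ) : ℝ)/2
      ≤ (if ∃ e ∈ s, A e ω then (1:ℝ) else 0) := by
    intro ω
    by_cases hω : ∃ e ∈ s, A e ω
    · rw [if_pos hω]
      obtain ⟨e, he, hA⟩ := hω
      have hT : 1 ≤ T ω := Finset.card_pos.mpr ⟨e, Finset.mem_filter.mpr ⟨he, hA⟩⟩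
      rcases Nat.lt_or_ge (T ω) 2 with hlt | hge
      · have h1' : T ω = 1 := by omega
        simp [h1']
      · rw [Nat.cast_mul, Nat.cast_sub (by omega : 1 ≤ T ω), Nat.cast_one]
        have hx : (2:ℝ) ≤ (T ω : ℝ) := by exact_mod_cast hge
        nlinarith
    · rw [if_neg hω]
      have hT : T ω = 0 := by
        apply Finset.card_eq_zero.mpr
        apply Finset.filter_eq_empty_iff.mpr
        intro e he hA
        exact hω ⟨e, he, hA⟩
      simp [hT]
  rw [h1, h3, h5, Finset.sum_div, ← Finset.sum_sub_distrib]
  exact Finset.sum_le_sum (fun ω _ => h4 ω)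

open Finset in
lemma natCard_subtype {Ω : Type*} [Fintype Ω] (p : Ω → Prop) [DecidablePred p] :
    Nat.card {ω // p ω} = (univ.filter p).card := by
  rw [Nat.card_eq_fintype_card, Fintype.card_subtype]

open Finset in
lemma prob_filter {Ω : Type*} [Fintype Ω] (p : Ω → Prop) [DecidablePred p] :
    prob p = ((univ.filter p).card : ℝ) / (Fintype.card Ω : ℝ) := by
  rw [prob, natCard_subtype]


lemma prob_mono {Ω : Type*} [Fintype Ω] {p q : Ω → Prop} (h : ∀ ω, p ω → q ω) :
    prob p ≤ prob q := by
  unfold prob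
  apply div_le_div_of_nonneg_right ?_ (Nat.cast_nonneg _)
  exact_mod_cast Nat.card_le_card_of_injective
    (fun x : {ω // p ω} => (⟨x.1, h x.1 x.2⟩ : {ω // q ω}))
    (fun a b hab => by cases a; cases b; simpa using hab)

open Finset in
lemma main_bound (n m k : ℕ) (hk : 1 ≤ k)
    (hcard : 2^(k-1) ≤ (m/2) * ((m/2) * (n/k))) :
    (3:ℝ)/8 ≤ prob (fun X : Omega m n => eventD m k X) := by
  classical
  have h2pos : 0 < 2^(k-1) := Nat.pow_pos (by norm_num)
  have hprod : 0 < (m/2) * ((m/2) * (n/k)) := lt_of_lt_of_le h2pos hcard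
  have hs1 : 1 ≤ m/2 := by
    rcases Nat.eq_zero_or_pos (m/2) with h0 | h0
    · rw [h0] at hprod; simp at hprod
    · exact h0
  have hr1 : 1 ≤ n/k := by
    rcases Nat.eq_zero_or_pos (n/k) with h0 | h0
    · rw [h0] at hprod; simp at hprod
    · exact h0
  have hilt : ∀ e : Fin (m/2) × Fin (m/2) × Fin (n/k), (e.1 : ℕ) < m := by
    intro e; have := e.1.isLt; omega
  have hjlt : ∀ e : Fin (m/2) × Fin (m/2) × Fin (n/k), m/2 + (e.2.1 : ℕ) < m := by
    intro e; have := e.2.1.isLt; omega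
  set ι := Fin (m/2) × Fin (m/2) × Fin (n/k) with hι
  let iI : ι → Fin m := fun e => ⟨e.1, hilt e⟩
  let jI : ι → Fin m := fun e => ⟨m/2 + e.2.1, hjlt e⟩
  let bI : ι → ℕ := fun e => e.2.2
  have hij : ∀ e : ι, iI e < jI e := by
    intro e
    simp only [iI, jI, Fin.lt_def]
    omega
  have hb : ∀ e : ι, (bI e + 1) * k ≤ n := by
    intro e
    have h1 : bI e + 1 ≤ n/k := e.2.2.isLt
    calc (bI e + 1)*k ≤ (n/k)*k := Nat.mul_le_mul_right k h1
      _ ≤ n := Nat.div_mul_le_self n k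
  set A : ι → Omega m n → Prop :=
    fun e X => kmer k (X (iI e)) (bI e * k) = kmer k (X (jI e)) (bI e * k) with hA
  have hAD : ∀ e X, A e X → eventD m k X := by
    intro e X hAe
    refine ⟨iI e, jI e, hij e, bI e * k, ?_, hAe⟩
    have h1 := hb e
    have h2 : (bI e + 1)*k = bI e * k + k := by ring
    omega
  have hcardι : 2^(k-1) ≤ (univ : Finset ι).card := by
    rw [card_univ]
    simpa [ι, Fintype.card_prod] using hcard
  obtain ⟨E, -, hE⟩ := Finset.exists_subset_card_eq hcardι
  set c : ℝ := (Fintype.card (Omega m n) : ℝ) with hc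
  have hcpos : (0:ℝ) < c := by
    rw [hc]; exact_mod_cast Fintype.card_pos
  have term1 : ∀ e ∈ E, ((univ.filter (A e)).card : ℝ) = c / 2^k := by
    intro e _
    have h := count_one (iI e) (jI e) (hij e).ne (bI e) (hb e)
    rw [natCard_subtype] at h
    rw [eq_div_iff (by positivity), hc]
    simp only [hA]
    exact_mod_cast h
  have term2 : ∀ e ∈ E, ∀ e' ∈ E.erase e,
      ((univ.filter (fun X => A e X ∧ A e' X)).card : ℝ) = c / (2^k * 2^k) := by
    intro e _ e' he'
    have hne : ¬(iI e = iI e' ∧ jI e = jI e' ∧ bI e = bI e') := by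
      rintro ⟨h1, h2, h3⟩
      apply (Finset.mem_erase.mp he').1
      have e1 : e'.1 = e.1 := by
        apply Fin.ext
        have := congrArg Fin.val h1
        simpa [iI] using this.symm
      have e2 : e'.2.1 = e.2.1 := by
        apply Fin.ext
        have := congrArg Fin.val h2
        simp only [jI] at this
        omega
      have e3 : e'.2.2 = e.2.2 := by
        apply Fin.ext
        simpa [bI] using h3.symm
      exact Prod.ext e1 (Prod.ext e2 e3)
    have h := count_two (hij e) (hij e') (hb e) (hb e') hne
    rw [natCard_subtype] at h
    rw [eq_div_iff (by positivity), hc]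
    simp only [hA]
    exact_mod_cast h
  have hbon := bonferroni E A
  rw [Finset.sum_congr rfl term1, Finset.sum_const, hE] at hbon
  have hpair : (∑ e ∈ E, ∑ e' ∈ E.erase e,
        ((univ.filter (fun X => A e X ∧ A e' X)).card : ℝ))
      ≤ (2:ℝ)^(k-1) * ((2:ℝ)^(k-1) * (c/(2^k*2^k))) := by
    calc ∑ e ∈ E, ∑ e' ∈ E.erase e, ((univ.filter (fun X => A e X ∧ A e' X)).card : ℝ)
        ≤ ∑ _e ∈ E, (2:ℝ)^(k-1) * (c/(2^k*2^k)) := by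
          apply Finset.sum_le_sum
          intro e he
          rw [Finset.sum_congr rfl (term2 e he), Finset.sum_const, nsmul_eq_mul]
          have hcc : (0:ℝ) ≤ c/(2^k*2^k) := by positivity
          have hle : ((E.erase e).card : ℝ) ≤ (2:ℝ)^(k-1) := by
            calc ((E.erase e).card : ℝ) ≤ (E.card : ℝ) := by
                  exact_mod_cast Finset.card_le_card (Finset.erase_subset e E)
              _ = (2:ℝ)^(k-1) := by rw [hE]; push_cast; ring
          exact mul_le_mul_of_nonneg_right hle hcc
      _ = (2:ℝ)^(k-1) * ((2:ℝ)^(k-1) * (c/(2^k*2^k))) := by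
          rw [Finset.sum_const, hE, nsmul_eq_mul]
          push_cast
          ring
  have hbon2 : (3:ℝ)/8 * c ≤ ((univ.filter (fun ω => ∃ e ∈ E, A e ω)).card : ℝ) := by
    refine le_trans ?_ hbon
    have h3 : (2:ℝ)^(k-1) * 2 = 2^k := by
      have hk1 : k - 1 + 1 = k := by omega
      rw [← pow_succ, hk1]
    have hkey : (3:ℝ)/8 * c
        = ((2^(k-1) : ℕ) : ℝ) * (c / 2^k)
          - ((2:ℝ)^(k-1) * ((2:ℝ)^(k-1) * (c/(2^k*2^k))))/2 := by
      have h2 : ((2^(k-1) : ℕ) : ℝ) = (2:ℝ)^(k-1) := by push_cast; ring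
      rw [h2, ← h3]
      have hx : (0:ℝ) < (2:ℝ)^(k-1) := by positivity
      field_simp
      ring
    rw [nsmul_eq_mul, hkey]
    have hdiv : (∑ e ∈ E, ∑ e' ∈ E.erase e,
        ((univ.filter (fun X => A e X ∧ A e' X)).card : ℝ))/2
        ≤ ((2:ℝ)^(k-1) * ((2:ℝ)^(k-1) * (c/(2^k*2^k))))/2 := by
      linarith
    linarith
  calc (3:ℝ)/8 = (3/8 * c) / c := by field_simp
    _ ≤ ((univ.filter (fun ω => ∃ e ∈ E, A e ω)).card : ℝ) / c := by gcongr
    _ = prob (fun X => ∃ e ∈ E, A e X) := by rw [prob_filter, hc]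
    _ ≤ prob (fun X : Omega m n => eventD m k X) :=
        prob_mono (fun X hX => by obtain ⟨e, _, hAe⟩ := hX; exact hAD e X hAe)

lemma prob_le_one {Ω : Type*} [Fintype Ω] (p : Ω → Prop) : prob p ≤ 1 := by
  classical
  rcases Nat.eq_zero_or_pos (Fintype.card Ω) with h0 | h0
  · simp [prob, h0]
  · rw [prob, div_le_one (by exact_mod_cast h0)]
    have : Nat.card {ω // p ω} ≤ Fintype.card Ω := by
      rw [Nat.card_eq_fintype_card]
      exact Fintype.card_subtype_le _
    exact_mod_cast this

open Filter Real in
lemma eventually_hyps (α β : ℝ) (hα : 0 < α) (hβ : 0 < β) (h : β < 2*α+1) :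
    ∀ᶠ n : ℕ in atTop, 1 ≤ ⌈β * Real.logb 2 (n:ℝ)⌉₊ ∧
      2^(⌈β * Real.logb 2 (n:ℝ)⌉₊ - 1)
        ≤ (⌈(n:ℝ)^α⌉₊/2) * ((⌈(n:ℝ)^α⌉₊/2) * (n / ⌈β * Real.logb 2 (n:ℝ)⌉₊)) := by
  set ε := 2*α + 1 - β with hε
  have hεpos : 0 < ε := by linarith
  have hlog2 : (0:ℝ) < Real.log 2 := Real.log_pos (by norm_num)
  have E2 : ∀ᶠ x : ℝ in atTop, 2 ≤ x ^ α :=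
    (tendsto_rpow_atTop hα).eventually_ge_atTop 2
  have E4 : ∀ᶠ x : ℝ in atTop, 32*(β * Real.logb 2 x + 1) ≤ x ^ ε := by
    have h1 := (isLittleO_log_rpow_atTop hεpos).def
      (c := Real.log 2 / (64*β)) (by positivity)
    have h2 : ∀ᶠ x : ℝ in atTop, (64:ℝ) ≤ x ^ ε :=
      (tendsto_rpow_atTop hεpos).eventually_ge_atTop 64
    filter_upwards [h1, h2, eventually_ge_atTop 1] with x hx1 hx2 hx3
    have hxlog : 0 ≤ Real.log x := Real.log_nonneg hx3
    have hxe : (0:ℝ) ≤ x ^ ε := Real.rpow_nonneg (by linarith) ε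
    simp only [Real.norm_eq_abs, id_eq] at hx1
    rw [abs_of_nonneg hxlog, abs_of_nonneg hxe] at hx1
    rw [Real.logb]
    have key : 32 * (β * (Real.log x / Real.log 2)) ≤ x ^ ε / 2 := by
      calc 32 * (β * (Real.log x / Real.log 2))
          = (32 * β / Real.log 2) * Real.log x := by field_simp
        _ ≤ (32 * β / Real.log 2) * (Real.log 2 / (64*β) * x ^ ε) := by
            apply mul_le_mul_of_nonneg_left hx1 (by positivity)
        _ = x ^ ε / 2 := by field_simp; ring
    linarith
  have E3 : ∀ᶠ x : ℝ in atTop, 2*(β * Real.logb 2 x + 1) ≤ x := by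
    have h1 := (isLittleO_log_id_atTop).def
      (c := Real.log 2 / (8*β)) (by positivity)
    filter_upwards [h1, eventually_ge_atTop 4] with x hx1 hx2
    have hxlog : 0 ≤ Real.log x := Real.log_nonneg (by linarith)
    simp only [Real.norm_eq_abs, id_eq] at hx1
    rw [abs_of_nonneg hxlog, abs_of_nonneg (by linarith : (0:ℝ) ≤ x)] at hx1
    rw [Real.logb]
    have key : 2 * (β * (Real.log x / Real.log 2)) ≤ x / 2 := by
      calc 2 * (β * (Real.log x / Real.log 2))
          = (2 * β / Real.log 2) * Real.log x := by field_simp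
        _ ≤ (2 * β / Real.log 2) * (Real.log 2 / (8*β) * x) := by
            apply mul_le_mul_of_nonneg_left hx1 (by positivity)
        _ = x / 4 := by field_simp; ring
        _ ≤ x / 2 := by linarith
    linarith
  have HN := tendsto_natCast_atTop_atTop (R := ℝ)
  filter_upwards [HN.eventually E2, HN.eventually E4, HN.eventually E3,
    eventually_ge_atTop 2] with n h2 h4 h3 hn2
  set N := (n:ℝ) with hN
  have hN2 : (2:ℝ) ≤ N := by rw [hN]; exact_mod_cast hn2
  have hNpos : (0:ℝ) < N := by linarith
  have hL : 0 < Real.logb 2 N := Real.logb_pos one_lt_two (by linarith)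
  set k := ⌈β * Real.logb 2 N⌉₊ with hkdef
  set m := ⌈N^α⌉₊ with hmdef
  have hk1 : 1 ≤ k := Nat.one_le_iff_ne_zero.mpr
    (Nat.pos_iff_ne_zero.mp (Nat.ceil_pos.mpr (mul_pos hβ hL)))
  refine ⟨hk1, ?_⟩
  set K := (k:ℝ) with hK
  have hkle : K ≤ β * Real.logb 2 N + 1 := (Nat.ceil_lt_add_one (by positivity)).le
  have hKpos : (0:ℝ) < K := by rw [hK]; exact_mod_cast hk1
  have hm : N^α ≤ (m:ℝ) := Nat.le_ceil _
  set s := m/2 with hsdef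
  set r := n/k with hrdef
  have hs : N^α/4 ≤ (s:ℝ) := by
    have hnat : m ≤ 2*s + 1 := by omega
    have : (m:ℝ) ≤ 2*(s:ℝ) + 1 := by exact_mod_cast hnat
    linarith [h2]
  have hdm := Nat.div_add_mod n k
  have hmod : n % k < k := Nat.mod_lt n (by omega)
  have hcast : K * (r:ℝ) + ((n % k : ℕ):ℝ) = N := by rw [hK, hN, hrdef]; exact_mod_cast hdm
  have hmodr : ((n % k : ℕ):ℝ) < K := by rw [hK]; exact_mod_cast hmod
  have h2k : 2*K ≤ N := by linarith
  have hr : N/(2*K) ≤ (r:ℝ) := by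
    rw [div_le_iff₀ (by positivity)]
    nlinarith
  -- the main chain
  have hkc : ((k-1:ℕ):ℝ) = K - 1 := by
    rw [Nat.cast_sub hk1]; norm_num; exact hK.symm
  have hB : ((2:ℝ))^((k-1:ℕ)) ≤ N^β := by
    calc (2:ℝ)^((k-1:ℕ)) = (2:ℝ) ^ (((k-1:ℕ):ℝ)) := (Real.rpow_natCast 2 (k-1)).symm
      _ ≤ (2:ℝ) ^ (β * Real.logb 2 N) := by
          apply Real.rpow_le_rpow_of_exponent_le one_le_two
          rw [hkc]; linarith
      _ = N^β := by
          rw [mul_comm, Real.rpow_mul (by norm_num : (0:ℝ) ≤ 2),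
            Real.rpow_logb (by norm_num) (by norm_num) hNpos]
  have hEps : 32*K ≤ N^ε := by linarith
  have hprod_eq : N^β * N^ε = N^α * (N^α * N) := by
    rw [← Real.rpow_add hNpos]
    have e1 : N^α * (N^α * N) = N^(α + (α + 1)) := by
      rw [Real.rpow_add hNpos, Real.rpow_add hNpos, Real.rpow_one]
    rw [e1]
    congr 1
    rw [hε]; ring
  have hBpos : (0:ℝ) < N^β := Real.rpow_pos_of_pos hNpos β
  have step1 : N^β * (32*K) ≤ N^α*(N^α*N) := by
    calc N^β * (32*K) ≤ N^β * N^ε := mul_le_mul_of_nonneg_left hEps hBpos.le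
      _ = N^α*(N^α*N) := hprod_eq
  have step2 : N^β ≤ (N^α/4)*((N^α/4)*(N/(2*K))) := by
    have hre : (N^α/4)*((N^α/4)*(N/(2*K))) = N^α*(N^α*N)/(32*K) := by
      field_simp; ring
    rw [hre, le_div_iff₀ (by positivity)]
    linarith
  have step3 : (N^α/4)*((N^α/4)*(N/(2*K))) ≤ (s:ℝ)*((s:ℝ)*(r:ℝ)) := by
    have hs0 : (0:ℝ) ≤ (s:ℝ) := Nat.cast_nonneg _
    apply mul_le_mul hs (mul_le_mul hs hr (by positivity) hs0) (by positivity) hs0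
  have hfinal : ((2^(k-1) : ℕ):ℝ) ≤ ((s*(s*r) : ℕ):ℝ) := by
    push_cast
    calc ((2:ℝ))^((k-1:ℕ)) ≤ N^β := hB
      _ ≤ (N^α/4)*((N^α/4)*(N/(2*K))) := step2
      _ ≤ (s:ℝ)*((s:ℝ)*(r:ℝ)) := step3
  exact_mod_cast hfinal

/-- If `β < 2α + 1`, then with `m = ⌈n^α⌉` and `k = ⌈β log₂ n⌉`, the probability
that two of the `m` uniformly random strings share a `k`-mer at an aligned position
has `liminf` at least `1/4`. -/
theorem aligned_repeat_liminf
    (α β : ℝ) (hα : 0 < α) (hβ : 0 < β) (h : β < 2 * α + 1) :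
    (1 : ℝ) / 4 ≤
      Filter.liminf
        (fun n : ℕ =>
          prob (fun X : Fin ⌈(n : ℝ) ^ α⌉₊ → Fin n → Bool =>
            eventD ⌈(n : ℝ) ^ α⌉₊ ⌈β * Real.logb 2 (n : ℝ)⌉₊ X))
        Filter.atTop := by
  have hβ' : β < 2*α+1 := by linarith
  have hq : ∀ᶠ n : ℕ in Filter.atTop,
      (1:ℝ)/4 ≤ prob (fun X : Fin ⌈(n : ℝ) ^ α⌉₊ → Fin n → Bool =>
        eventD ⌈(n : ℝ) ^ α⌉₊ ⌈β * Real.logb 2 (n : ℝ)⌉₊ X) := by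
    filter_upwards [eventually_hyps α β hα hβ hβ'] with n hn
    obtain ⟨hk1, hcard⟩ := hn
    have := main_bound n ⌈(n : ℝ) ^ α⌉₊ ⌈β * Real.logb 2 (n : ℝ)⌉₊ hk1 hcard
    calc (1:ℝ)/4 ≤ 3/8 := by norm_num
      _ ≤ _ := this
  refine Filter.le_liminf_of_le ?_ hq
  refine Filter.IsBoundedUnder.isCoboundedUnder_ge ?_
  exact ⟨1, Filter.eventually_map.mpr (Filter.Eventually.of_forall (fun n => prob_le_one _))⟩
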